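/- Assume ∫_{{y : p(y_{-k}^k) > 0}} ‖P(X_0 | y_{-k}^k) − P̂(X_0 | y_{-k}^k)‖₁ · p(y_{-k}^k) dy_{-k}^k ≤ ε*, and that P̂(X_0 | y_{-k}^k) has all entries in [0,1] whenever p(y_{-k}^k) > 0. Let ĥ and ĥ^δ be measurable rules ℝ^{2k+1} → A such that, whenever p(y_{-k}^k) > 0, ĥ(y_{-k}^k) is a Bayes response B(P̂(X_0 | y_{-k}^k)) and ĥ^δ(y_{-k}^k) is a Bayes response B(R_δ(P̂(X_0 | y_{-k}^k))). Then |R(ĥ) − R(ĥ^δ)| ≤ 2·Λ_max·(ε* + M·δ/4). -/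

import Mathlib

open MeasureTheory Finset

noncomputable section
namespace GenCUDE

/-- The center index of a `(2k+1)`-tuple (0-indexed position `k`). -/
def center (k : ℕ) : Fin (2*k+1) := ⟨k, by omega⟩

/-- Remove the center coordinate of a `(2k+1)`-tuple, yielding the context (a `2k`-tuple). -/
def dropCenter {α : Type*} (k : ℕ) (y : Fin (2*k+1) → α) : Fin (2*k) → α :=
  fun i => y ((center k).succAbove i)

/-- `p(y_{-k}^k)`: the joint output density of the full `(2k+1)`-tuple. -/
def pFull {M k : ℕ} (f : Fin M → ℝ → ℝ) (P : (Fin (2*k+1) → Fin M) → ℝ)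
    (y : Fin (2*k+1) → ℝ) : ℝ :=
  ∑ u : Fin (2*k+1) → Fin M, P u * ∏ j, f (u j) (y j)

/-- `p(y_{-0})`: the output density of the context. -/
def pCtx {M k : ℕ} (f : Fin M → ℝ → ℝ) (P : (Fin (2*k+1) → Fin M) → ℝ)
    (c : Fin (2*k) → ℝ) : ℝ :=
  ∑ u : Fin (2*k+1) → Fin M, P u * ∏ i, f (dropCenter k u i) (c i)

/-- `p(a, y_{-k}^k)`. -/
def pJoint {M k : ℕ} (f : Fin M → ℝ → ℝ) (P : (Fin (2*k+1) → Fin M) → ℝ)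
    (a : Fin M) (y : Fin (2*k+1) → ℝ) : ℝ :=
  ∑ u : Fin (2*k+1) → Fin M,
    (if u (center k) = a then P u * ∏ j, f (u j) (y j) else 0)

/-- `p(a, y_{-0})`. -/
def pJointCtx {M k : ℕ} (f : Fin M → ℝ → ℝ) (P : (Fin (2*k+1) → Fin M) → ℝ)
    (a : Fin M) (c : Fin (2*k) → ℝ) : ℝ :=
  ∑ u : Fin (2*k+1) → Fin M,
    (if u (center k) = a then P u * ∏ i, f (dropCenter k u i) (c i) else 0)

/-- `P(X_0 = · | y_{-k}^k)`. -/
def postFull {M k : ℕ} (f : Fin M → ℝ → ℝ) (P : (Fin (2*k+1) → Fin M) → ℝ)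
    (y : Fin (2*k+1) → ℝ) : Fin M → ℝ :=
  fun a => pJoint f P a y / pFull f P y

/-- `P(X_0 = · | y_{-0})`. -/
def postCtx {M k : ℕ} (f : Fin M → ℝ → ℝ) (P : (Fin (2*k+1) → Fin M) → ℝ)
    (c : Fin (2*k) → ℝ) : Fin M → ℝ :=
  fun a => pJointCtx f P a c / pCtx f P c

/-- `P(Z_0 = · | y_{-0}) = Σ_a P(X_0=a | y_{-0}) Π(a,·)`. -/
def PZ {M k : ℕ} (f : Fin M → ℝ → ℝ) (P : (Fin (2*k+1) → Fin M) → ℝ)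
    (Pi : Matrix (Fin M) (Fin M) ℝ) (c : Fin (2*k) → ℝ) : Fin M → ℝ :=
  fun z => ∑ a, postCtx f P c a * Pi a z

/-- The approximate posterior `P̂(X_0 = · | y_{-k}^k)` built from the network output `g`. -/
def postHat {M k : ℕ} (f : Fin M → ℝ → ℝ) (P : (Fin (2*k+1) → Fin M) → ℝ)
    (Pi : Matrix (Fin M) (Fin M) ℝ) (g : (Fin (2*k) → ℝ) → Fin M → ℝ)
    (y : Fin (2*k+1) → ℝ) : Fin M → ℝ :=
  fun a => (pCtx f P (dropCenter k y) / pFull f P y)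
      * (∑ z, g (dropCenter k y) z * Pi⁻¹ z a) * f a (y (center k))

/-- `b` is a Bayes response with respect to (the not necessarily normalized vector) `v`. -/
def IsBayes {M : ℕ} (Λ : Matrix (Fin M) (Fin M) ℝ) (v : Fin M → ℝ) (b : Fin M) : Prop :=
  ∀ c : Fin M, ∑ a, Λ a b * v a ≤ ∑ a, Λ a c * v a

/-- Single-letter risk `R(h)` of a sliding-window rule `h` under `P ⊗ C`. -/
def risk {M k : ℕ} (f : Fin M → ℝ → ℝ) (P : (Fin (2*k+1) → Fin M) → ℝ)
    (Λ : Matrix (Fin M) (Fin M) ℝ) (h : (Fin (2*k+1) → ℝ) → Fin M) : ℝ :=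
  ∑ u : Fin (2*k+1) → Fin M,
    P u * ∫ y : Fin (2*k+1) → ℝ, Λ (u (center k)) (h y) * ∏ j, f (u j) (y j)

/-- Extend a `Fin n`-indexed sequence to `ℕ` by zero. -/
def ext {n : ℕ} (y : Fin n → ℝ) : ℕ → ℝ := fun m => if h : m < n then y ⟨m, h⟩ else 0

/-- The window `y_{i-k}^{i+k}` (0-indexed center `i`). -/
def window (k : ℕ) (y : ℕ → ℝ) (i : ℕ) : Fin (2*k+1) → ℝ := fun j => y (i - k + j.val)

/-- The empirical distribution of `(2k+1)`-blocks of `x^n` (0-indexed positions `0,…,n-1`). -/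
def empDist (M n k : ℕ) (x : ℕ → Fin M) : (Fin (2*k+1) → Fin M) → ℝ :=
  fun u => (((Finset.Ico k (n - k)).filter
      fun i => ∀ j : Fin (2*k+1), x (i - k + j.val) = u j).card : ℝ) / ((n - 2*k : ℕ) : ℝ)

/-- The law of `Y^n`: independent coordinates, `Y_i` with density `f_{x_i}`. -/
def lawSeq {M : ℕ} (n : ℕ) (f : Fin M → ℝ → ℝ) (x : ℕ → Fin M) : Measure (Fin n → ℝ) :=
  Measure.pi fun i : Fin n => volume.withDensity fun t => ENNReal.ofReal (f (x i.val) t)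

/-- The joint law of the `(2k+1)` noisy outputs under `P ⊗ C`. -/
def lawBlock {M k : ℕ} (f : Fin M → ℝ → ℝ) (P : (Fin (2*k+1) → Fin M) → ℝ) :
    Measure (Fin (2*k+1) → ℝ) :=
  ∑ u : Fin (2*k+1) → Fin M, ENNReal.ofReal (P u) •
    Measure.pi fun j => volume.withDensity fun t => ENNReal.ofReal (f (u j) t)

/-- The average loss of the sliding-window rule `h` on `(x^n, y^n)`. -/
def avgLoss {M : ℕ} (n k : ℕ) (Λ : Matrix (Fin M) (Fin M) ℝ) (x : ℕ → Fin M)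
    (h : (Fin (2*k+1) → ℝ) → Fin M) (y : Fin n → ℝ) : ℝ :=
  (((n - 2*k : ℕ) : ℝ))⁻¹ * ∑ i ∈ Finset.Ico k (n - k), Λ (x i) (h (window k (ext y) i))



private lemma exists_grid (N : ℕ) (hN : 0 < N) (x : ℝ) (hx0 : 0 ≤ x) (hx1 : x ≤ 1) :
    ∃ m : ℕ, m ≤ N ∧ |(m : ℝ) * (1/(N:ℝ)) - x| ≤ 1/(N:ℝ)/2 := by
  have hNpos : (0:ℝ) < N := by exact_mod_cast hN
  set r : ℤ := round ((N:ℝ) * x) with hr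
  have habs : |(N:ℝ) * x - r| ≤ 1/2 := abs_sub_round _
  obtain ⟨hL, hU⟩ := abs_le.mp habs
  have hr0 : (0:ℤ) ≤ r := by
    have h : (-1:ℝ) < (r:ℝ) := by nlinarith
    have h2 : (-1:ℤ) < r := by exact_mod_cast h
    omega
  have hrN : r ≤ (N:ℤ) := by
    have h : (r:ℝ) < (N:ℝ) + 1 := by nlinarith
    have h2 : r < (N:ℤ) + 1 := by exact_mod_cast h
    omega
  refine ⟨r.toNat, by omega, ?_⟩
  have hc : ((r.toNat : ℕ) : ℝ) = (r : ℝ) := by exact_mod_cast Int.toNat_of_nonneg hr0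
  rw [hc]
  have heq : (r:ℝ) * (1/(N:ℝ)) - x = -(((N:ℝ)*x - r) / N) := by field_simp; ring
  rw [heq, abs_neg, abs_div, abs_of_pos hNpos]
  calc |(N:ℝ)*x - r| / N ≤ (1/2) / N := by gcongr
    _ = 1/(N:ℝ)/2 := by ring

private lemma bayes_key {M : ℕ} (Λ : Matrix (Fin M) (Fin M) ℝ) (Λmax : ℝ) (hΛmax : 0 ≤ Λmax)
    (hΛ : ∀ a b, Λ a b ∈ Set.Icc 0 Λmax) (u v w : Fin M → ℝ) (b b' : Fin M)
    (hb : IsBayes Λ v b) (hb' : IsBayes Λ w b') :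
    |∑ a, (Λ a b - Λ a b') * u a| ≤
      Λmax * ∑ a, |u a - v a| + Λmax * ∑ a, |v a - w a| := by
  have hcoef : ∀ (c c' : Fin M) (x : ℝ) (a : Fin M), (Λ a c - Λ a c') * x ≤ Λmax * |x| := by
    intro c c' x a
    have h1 := hΛ a c
    have h2 := hΛ a c'
    simp only [Set.mem_Icc] at h1 h2
    calc (Λ a c - Λ a c') * x ≤ |(Λ a c - Λ a c') * x| := le_abs_self _
      _ = |Λ a c - Λ a c'| * |x| := abs_mul _ _
      _ ≤ Λmax * |x| := by
          apply mul_le_mul_of_nonneg_right _ (abs_nonneg x)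
          rw [abs_le]; constructor <;> linarith
  have habs2 : ∀ (c c' : Fin M) (x : Fin M → ℝ),
      ∑ a, (Λ a c - Λ a c') * x a ≤ Λmax * ∑ a, |x a| := by
    intro c c' x
    rw [Finset.mul_sum]
    exact Finset.sum_le_sum fun a _ => hcoef c c' (x a) a
  have hnn2 : 0 ≤ Λmax * ∑ a, |v a - w a| :=
    mul_nonneg hΛmax (Finset.sum_nonneg fun a _ => abs_nonneg _)
  rw [abs_le]
  constructor
  · have h1 : ∑ a, (Λ a b' - Λ a b) * (u a - v a) ≤ Λmax * ∑ a, |u a - v a| := habs2 _ _ _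
    have h2 : ∑ a, (Λ a b' - Λ a b) * (v a - w a) ≤ Λmax * ∑ a, |v a - w a| := habs2 _ _ _
    have h3 : ∑ a, Λ a b' * w a ≤ ∑ a, Λ a b * w a := hb' b
    have expand : ∑ a, (Λ a b' - Λ a b) * u a =
        (∑ a, (Λ a b' - Λ a b) * (u a - v a)) + (∑ a, (Λ a b' - Λ a b) * (v a - w a))
        + ((∑ a, Λ a b' * w a) - ∑ a, Λ a b * w a) := by
      rw [← Finset.sum_sub_distrib, ← Finset.sum_add_distrib, ← Finset.sum_add_distrib]
      exact Finset.sum_congr rfl fun a _ => by ring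
    have hneg : ∑ a, (Λ a b' - Λ a b) * u a = -∑ a, (Λ a b - Λ a b') * u a := by
      rw [← Finset.sum_neg_distrib]
      exact Finset.sum_congr rfl fun a _ => by ring
    rw [hneg] at expand
    linarith
  · have h1 : ∑ a, (Λ a b - Λ a b') * (u a - v a) ≤ Λmax * ∑ a, |u a - v a| := habs2 _ _ _
    have h3 : ∑ a, Λ a b * v a ≤ ∑ a, Λ a b' * v a := hb b'
    have expand : ∑ a, (Λ a b - Λ a b') * u a =
        (∑ a, (Λ a b - Λ a b') * (u a - v a))
        + ((∑ a, Λ a b * v a) - ∑ a, Λ a b' * v a) := by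
      rw [← Finset.sum_sub_distrib, ← Finset.sum_add_distrib]
      exact Finset.sum_congr rfl fun a _ => by ring
    linarith

/-- Lemma 5 of the paper: if the weighted `L¹` posterior-approximation
error is at most `ε*`, the approximate posterior has entries in `[0,1]`, and `ĥ`, `ĥ^δ`
are measurable Bayes-response rules for `P̂` and for its quantization `R_δ(P̂)` respectively,
then `|R(ĥ) − R(ĥ^δ)| ≤ 2 Λ_max (ε* + M δ / 4)`. -/
theorem statement10
    (M k : ℕ) (hM : 2 ≤ M) (hk : 1 ≤ k)
    (f : Fin M → ℝ → ℝ) (hf_meas : ∀ a, Measurable (f a))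
    (hf_nonneg : ∀ a t, 0 ≤ f a t) (hf_int : ∀ a, ∫ t, f a t = 1)
    (Q : ℝ → Fin M) (hQ : Measurable Q)
    (Pi : Matrix (Fin M) (Fin M) ℝ)
    (hPi : ∀ a z, Pi a z = ∫ t in {s : ℝ | Q s = z}, f a t)
    (hPi_inv : IsUnit Pi.det)
    (Λ : Matrix (Fin M) (Fin M) ℝ) (Λmax : ℝ) (hΛmax : 0 < Λmax)
    (hΛ : ∀ a b, Λ a b ∈ Set.Icc 0 Λmax)
    (P : (Fin (2*k+1) → Fin M) → ℝ)
    (hP_nonneg : ∀ u, 0 ≤ P u) (hP_sum : ∑ u, P u = 1)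
    (g : (Fin (2*k) → ℝ) → Fin M → ℝ) (hg_meas : Measurable g)
    (hg_simplex : ∀ c, (∀ z, 0 ≤ g c z) ∧ ∑ z, g c z = 1)
    (εstar : ℝ)
    (happrox : ∫ y in {y : Fin (2*k+1) → ℝ | 0 < pFull f P y},
        (∑ a, |postFull f P y a - postHat f P Pi g y a|) * pFull f P y ≤ εstar)
    (hhat_range : ∀ y : Fin (2*k+1) → ℝ, 0 < pFull f P y →
      ∀ a, postHat f P Pi g y a ∈ Set.Icc (0:ℝ) 1)
    (N : ℕ) (hN : 0 < N) (δ : ℝ) (hδ : δ = 1 / N)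
    (Rδ : (Fin M → ℝ) → (Fin M → ℝ))
    (hR_grid : ∀ v : Fin M → ℝ, (∀ i, v i ∈ Set.Icc (0:ℝ) 1) →
      ∀ i, ∃ m : ℕ, m ≤ N ∧ Rδ v i = m * δ)
    (hR_near : ∀ v : Fin M → ℝ, (∀ i, v i ∈ Set.Icc (0:ℝ) 1) →
      ∀ i, ∀ m : ℕ, m ≤ N → |Rδ v i - v i| ≤ |m * δ - v i|)
    (hhat hhatδ : (Fin (2*k+1) → ℝ) → Fin M)
    (hhat_meas : Measurable hhat) (hhatδ_meas : Measurable hhatδ)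
    (hhat_bayes : ∀ y : Fin (2*k+1) → ℝ, 0 < pFull f P y →
      IsBayes Λ (postHat f P Pi g y) (hhat y))
    (hhatδ_bayes : ∀ y : Fin (2*k+1) → ℝ, 0 < pFull f P y →
      IsBayes Λ (Rδ (postHat f P Pi g y)) (hhatδ y)) :
    |risk f P Λ hhat - risk f P Λ hhatδ| ≤ 2 * Λmax * (εstar + M * δ / 4) := by
  classical
  have hΛmax0 : 0 ≤ Λmax := hΛmax.le
  have hδ0 : 0 ≤ δ := by rw [hδ]; positivity
  -- basic integrability facts
  have hf_integrable : ∀ a, Integrable (f a) := by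
    intro a
    by_contra h
    have h0 := hf_int a
    rw [integral_undef h] at h0
    exact zero_ne_one h0
  have prod_meas : ∀ u : Fin (2*k+1) → Fin M,
      Measurable fun y : Fin (2*k+1) → ℝ => ∏ j, f (u j) (y j) := fun u =>
    Finset.measurable_prod _ fun j _ => (hf_meas (u j)).comp (measurable_pi_apply j)
  have prod_int : ∀ u : Fin (2*k+1) → Fin M,
      Integrable (fun y : Fin (2*k+1) → ℝ => ∏ j, f (u j) (y j)) := fun u =>
    Integrable.fintype_prod (f := fun j t => f (u j) t) fun j => hf_integrable (u j)
  have prod_nonneg : ∀ (u : Fin (2*k+1) → Fin M) (y : Fin (2*k+1) → ℝ),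
      0 ≤ ∏ j, f (u j) (y j) := fun u y =>
    Finset.prod_nonneg fun j _ => hf_nonneg _ _
  have prod_integral : ∀ u : Fin (2*k+1) → Fin M,
      ∫ y : Fin (2*k+1) → ℝ, ∏ j, f (u j) (y j) = 1 := by
    intro u
    rw [volume_pi, integral_fintype_prod_eq_prod (f := fun j t => f (u j) t)]
    simp [hf_int]
  -- pFull facts
  have pFull_meas : Measurable (pFull f P) :=
    Finset.measurable_sum _ fun u _ => measurable_const.mul (prod_meas u)
  have pFull_nonneg : ∀ y, 0 ≤ pFull f P y := fun y =>
    Finset.sum_nonneg fun u _ => mul_nonneg (hP_nonneg u) (prod_nonneg u y)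
  have pFull_int : Integrable (pFull f P) := by
    unfold pFull
    exact integrable_finset_sum _ fun u _ => (prod_int u).const_mul (P u)
  have pFull_integral : ∫ y, pFull f P y = 1 := by
    unfold pFull
    rw [integral_finset_sum _ fun u _ => (prod_int u).const_mul (P u)]
    simp only [integral_const_mul, prod_integral, mul_one]
    exact hP_sum
  -- pJoint facts
  have pJoint_nonneg : ∀ a y, 0 ≤ pJoint f P a y := by
    intro a y
    apply Finset.sum_nonneg
    intro u _
    split
    · exact mul_nonneg (hP_nonneg u) (prod_nonneg u y)
    · exact le_refl 0
  have pJoint_le : ∀ a y, pJoint f P a y ≤ pFull f P y := by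
    intro a y
    apply Finset.sum_le_sum
    intro u _
    split
    · exact le_refl _
    · exact mul_nonneg (hP_nonneg u) (prod_nonneg u y)
  have pJoint_meas : ∀ a, Measurable (pJoint f P a) := by
    intro a
    apply Finset.measurable_sum
    intro u _
    by_cases h : u (center k) = a
    · simp only [if_pos h]
      exact measurable_const.mul (prod_meas u)
    · simp only [if_neg h]
      exact measurable_const
  -- measurability of posteriors
  have meas_dropCenter : Measurable fun y : Fin (2*k+1) → ℝ => dropCenter k y :=
    measurable_pi_lambda _ fun i => measurable_pi_apply _
  have meas_pCtx : Measurable (pCtx f P) :=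
    Finset.measurable_sum _ fun u _ => measurable_const.mul
      (Finset.measurable_prod _ fun i _ => (hf_meas _).comp (measurable_pi_apply i))
  have meas_post : ∀ a, Measurable fun y => postFull f P y a := fun a =>
    (pJoint_meas a).div pFull_meas
  have meas_postHat : ∀ a, Measurable fun y => postHat f P Pi g y a := by
    intro a
    unfold postHat
    apply Measurable.mul
    apply Measurable.mul
    · exact (meas_pCtx.comp meas_dropCenter).div pFull_meas
    · exact Finset.measurable_sum _ fun z _ =>
        ((measurable_pi_apply z).comp (hg_meas.comp meas_dropCenter)).mul_const _
    · exact (hf_meas a).comp (measurable_pi_apply (center k))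
  have meas_e : Measurable fun y => ∑ a, |postFull f P y a - postHat f P Pi g y a| :=
    Finset.measurable_sum _ fun a _ => ((meas_post a).sub (meas_postHat a)).abs
  -- the set S and the difference function D
  set S : Set (Fin (2*k+1) → ℝ) := {y | 0 < pFull f P y} with hSdef
  have hS : MeasurableSet S := measurableSet_lt measurable_const pFull_meas
  set D : (Fin (2*k+1) → ℝ) → ℝ := fun y =>
    ∑ a, (Λ a (hhat y) - Λ a (hhatδ y)) * pJoint f P a y with hDdef
  -- integrability of the loss terms
  have term_int : ∀ (h : (Fin (2*k+1) → ℝ) → Fin M), Measurable h →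
      ∀ u : Fin (2*k+1) → Fin M,
      Integrable (fun y : Fin (2*k+1) → ℝ =>
        Λ (u (center k)) (h y) * ∏ j, f (u j) (y j)) := by
    intro h hh u
    apply Integrable.bdd_mul (c := Λmax) (prod_int u)
    · exact ((Measurable.of_discrete (f := fun b => Λ (u (center k)) b)).comp hh).aestronglyMeasurable
    · refine ae_of_all _ fun y => ?_
      have hm := hΛ (u (center k)) (h y)
      rw [Real.norm_eq_abs, abs_of_nonneg hm.1]
      exact hm.2
  -- the risk difference equals the integral of D
  have riskdiff : risk f P Λ hhat - risk f P Λ hhatδ = ∫ y, D y := by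
    unfold risk
    rw [← Finset.sum_sub_distrib]
    have step1 : ∀ u ∈ (Finset.univ : Finset (Fin (2*k+1) → Fin M)),
        P u * (∫ y : Fin (2*k+1) → ℝ, Λ (u (center k)) (hhat y) * ∏ j, f (u j) (y j))
        - P u * (∫ y : Fin (2*k+1) → ℝ, Λ (u (center k)) (hhatδ y) * ∏ j, f (u j) (y j))
        = ∫ y : Fin (2*k+1) → ℝ,
            (P u * (Λ (u (center k)) (hhat y) * ∏ j, f (u j) (y j))
            - P u * (Λ (u (center k)) (hhatδ y) * ∏ j, f (u j) (y j))) := by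
      intro u _
      rw [integral_sub ((term_int hhat hhat_meas u).const_mul (P u))
        ((term_int hhatδ hhatδ_meas u).const_mul (P u)),
        integral_const_mul, integral_const_mul]
    have sub_int : ∀ u : Fin (2*k+1) → Fin M,
        Integrable (fun y : Fin (2*k+1) → ℝ =>
          P u * (Λ (u (center k)) (hhat y) * ∏ j, f (u j) (y j))
          - P u * (Λ (u (center k)) (hhatδ y) * ∏ j, f (u j) (y j))) := fun u =>
      ((term_int hhat hhat_meas u).const_mul (P u)).sub
        ((term_int hhatδ hhatδ_meas u).const_mul (P u))
    rw [Finset.sum_congr rfl step1, ← integral_finset_sum _ fun u _ => sub_int u]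
    congr 1
    funext y
    rw [hDdef]
    simp only []
    unfold pJoint
    simp only [Finset.mul_sum, mul_ite, mul_zero]
    rw [Finset.sum_comm]
    refine Finset.sum_congr rfl fun u _ => ?_
    rw [Finset.sum_ite_eq]
    simp only [Finset.mem_univ, if_true]
    ring
  -- pointwise bound on D
  set Bnd : (Fin (2*k+1) → ℝ) → ℝ := S.indicator (fun y =>
    Λmax * ((∑ a, |postFull f P y a - postHat f P Pi g y a|) * pFull f P y)
    + (Λmax * ((M:ℝ) * δ / 2)) * pFull f P y) with hBnddef
  have hDbound : ∀ y, |D y| ≤ Bnd y := by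
    intro y
    by_cases hy : y ∈ S
    · rw [hBnddef, Set.indicator_of_mem hy]
      have hp : 0 < pFull f P y := hy
      have hDrw : D y = (∑ a, (Λ a (hhat y) - Λ a (hhatδ y)) * postFull f P y a)
          * pFull f P y := by
        rw [hDdef]
        simp only []
        rw [Finset.sum_mul]
        refine Finset.sum_congr rfl fun a _ => ?_
        unfold postFull
        rw [mul_assoc, div_mul_cancel₀ _ hp.ne']
      have key := bayes_key Λ Λmax hΛmax0 hΛ (postFull f P y) (postHat f P Pi g y)
        (Rδ (postHat f P Pi g y)) (hhat y) (hhatδ y) (hhat_bayes y hp) (hhatδ_bayes y hp)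
      have hvw : ∑ a, |postHat f P Pi g y a - Rδ (postHat f P Pi g y) a|
          ≤ (M:ℝ) * (δ/2) := by
        have hrange := hhat_range y hp
        have hterm : ∀ a : Fin M,
            |postHat f P Pi g y a - Rδ (postHat f P Pi g y) a| ≤ δ/2 := by
          intro a
          obtain ⟨m, hm, hnear⟩ := exists_grid N hN (postHat f P Pi g y a)
            (hrange a).1 (hrange a).2
          have h2 := hR_near _ hrange a m hm
          rw [abs_sub_comm]
          calc |Rδ (postHat f P Pi g y) a - postHat f P Pi g y a|
              ≤ |(m:ℝ) * δ - postHat f P Pi g y a| := h2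
            _ ≤ δ/2 := by rw [hδ]; simpa using hnear
        calc ∑ a, |postHat f P Pi g y a - Rδ (postHat f P Pi g y) a|
            ≤ ∑ _a : Fin M, (δ/2) := Finset.sum_le_sum fun a _ => hterm a
          _ = (M:ℝ) * (δ/2) := by simp [Finset.sum_const, Finset.card_univ]
      have hsum : |∑ a, (Λ a (hhat y) - Λ a (hhatδ y)) * postFull f P y a|
          ≤ Λmax * (∑ a, |postFull f P y a - postHat f P Pi g y a|)
            + Λmax * ((M:ℝ) * (δ/2)) := by
        refine le_trans key ?_
        have := mul_le_mul_of_nonneg_left hvw hΛmax0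
        linarith
      calc |D y| = |∑ a, (Λ a (hhat y) - Λ a (hhatδ y)) * postFull f P y a|
            * pFull f P y := by rw [hDrw, abs_mul, abs_of_pos hp]
        _ ≤ (Λmax * (∑ a, |postFull f P y a - postHat f P Pi g y a|)
              + Λmax * ((M:ℝ) * (δ/2))) * pFull f P y :=
            mul_le_mul_of_nonneg_right hsum hp.le
        _ = Λmax * ((∑ a, |postFull f P y a - postHat f P Pi g y a|) * pFull f P y)
            + (Λmax * ((M:ℝ) * δ / 2)) * pFull f P y := by ring
    · rw [hBnddef, Set.indicator_of_notMem hy]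
      have hp0 : pFull f P y = 0 := by
        have h1 : ¬ 0 < pFull f P y := hy
        have h2 := pFull_nonneg y
        linarith [not_lt.mp h1]
      have hz : ∀ a, pJoint f P a y = 0 := by
        intro a
        have h1 := pJoint_nonneg a y
        have h2 := pJoint_le a y
        linarith
      simp [hDdef, hz]
  -- integrability of the bound
  have hF_int : IntegrableOn
      (fun y => (∑ a, |postFull f P y a - postHat f P Pi g y a|) * pFull f P y) S := by
    refine Integrable.mono' ((pFull_int.const_mul (M:ℝ)).integrableOn)
      ((meas_e.mul pFull_meas).aestronglyMeasurable.restrict) ?_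
    rw [ae_restrict_iff' hS]
    refine ae_of_all _ fun y hy => ?_
    have hp : 0 < pFull f P y := hy
    have hrange := hhat_range y hp
    have hpost01 : ∀ a, 0 ≤ postFull f P y a ∧ postFull f P y a ≤ 1 := by
      intro a
      constructor
      · exact div_nonneg (pJoint_nonneg a y) hp.le
      · rw [postFull, div_le_one hp]
        exact pJoint_le a y
    have habs1 : ∀ a : Fin M, |postFull f P y a - postHat f P Pi g y a| ≤ 1 := by
      intro a
      have h1 := hpost01 a
      have h2 := hrange a
      rw [Set.mem_Icc] at h2
      rw [abs_le]
      constructor <;> linarith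
    have he : (∑ a, |postFull f P y a - postHat f P Pi g y a|) ≤ (M:ℝ) := by
      calc (∑ a, |postFull f P y a - postHat f P Pi g y a|) ≤ ∑ _a : Fin M, (1:ℝ) :=
            Finset.sum_le_sum fun a _ => habs1 a
        _ = (M:ℝ) := by simp
    rw [Real.norm_eq_abs, abs_of_nonneg (mul_nonneg
      (Finset.sum_nonneg fun a _ => abs_nonneg _) (pFull_nonneg y))]
    exact mul_le_mul_of_nonneg_right he (pFull_nonneg y)
  have hBnd_int : Integrable Bnd := by
    rw [hBnddef]
    exact IntegrableOn.integrable_indicator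
      ((hF_int.const_mul Λmax).add ((pFull_int.integrableOn).const_mul _)) hS
  -- εstar is nonnegative
  have hεstar0 : 0 ≤ εstar := by
    refine le_trans ?_ happrox
    exact setIntegral_nonneg hS fun y _ => mul_nonneg
      (Finset.sum_nonneg fun a _ => abs_nonneg _) (pFull_nonneg y)
  -- ∫_S p ≤ 1
  have hSp1 : ∫ y in S, pFull f P y ≤ 1 := by
    have h1 : ∫ y in S, pFull f P y ≤ ∫ y, pFull f P y :=
      setIntegral_le_integral pFull_int (ae_of_all _ pFull_nonneg)
    rw [pFull_integral] at h1
    exact h1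
  -- integral of the bound
  have hBnd_integral : ∫ y, Bnd y ≤ Λmax * εstar + (Λmax * ((M:ℝ) * δ / 2)) := by
    rw [hBnddef, integral_indicator hS,
      integral_add (hF_int.const_mul Λmax) ((pFull_int.integrableOn).const_mul _),
      integral_const_mul, integral_const_mul]
    have h1 : Λmax * ∫ y in S,
        (∑ a, |postFull f P y a - postHat f P Pi g y a|) * pFull f P y ≤ Λmax * εstar :=
      mul_le_mul_of_nonneg_left happrox hΛmax0
    have h2 : (Λmax * ((M:ℝ) * δ / 2)) * ∫ y in S, pFull f P y
        ≤ (Λmax * ((M:ℝ) * δ / 2)) * 1 := by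
      apply mul_le_mul_of_nonneg_left hSp1
      positivity
    linarith
  -- conclude
  have hmain : |risk f P Λ hhat - risk f P Λ hhatδ| ≤ ∫ y, Bnd y := by
    rw [riskdiff]
    calc |∫ y, D y| = ‖∫ y, D y‖ := (Real.norm_eq_abs _).symm
      _ ≤ ∫ y, ‖D y‖ := norm_integral_le_integral_norm _
      _ = ∫ y, |D y| := by simp [Real.norm_eq_abs]
      _ ≤ ∫ y, Bnd y := integral_mono_of_nonneg (ae_of_all _ fun y => abs_nonneg _)
            hBnd_int (ae_of_all _ hDbound)
  have := le_trans hmain hBnd_integral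
  nlinarith [mul_nonneg hΛmax0 hεstar0]


end GenCUDE
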